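/- arXiv:1309.6656 — 2 statements merged into one kernel-verified Lean document; each statement's English description precedes it below -/
import Mathlib

section
/- If h : ℂ → ℝ is a harmonic function on all of ℂ that is bounded from below, then h is constant. -/
/-- A harmonic function on all of ℂ (i.e. globally the real part of an entire function,
since ℂ is simply connected) that is bounded from below is constant. -/
theorem harmonic_bounded_below_constant (h : ℂ → ℝ) (F : ℂ → ℂ)
    (hF : Differentiable ℂ F) (hhF : ∀ x, h x = (F x).re)
    (M : ℝ) (hbd : ∀ x, M ≤ h x) :
    ∀ x y : ℂ, h x = h y := by
  intro x y
  set g : ℂ → ℂ := fun z => Complex.exp (-F z) with hg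
  have hgd : Differentiable ℂ g := (hF.neg).cexp
  have hnorm : ∀ z, ‖g z‖ = Real.exp (-(F z).re) := by
    intro z
    simp [hg, Complex.norm_exp]
  have hb : Bornology.IsBounded (Set.range g) := by
    apply Metric.isBounded_range_iff.2 ⟨2 * Real.exp (-M), fun a b => ?_⟩
    calc dist (g a) (g b) ≤ ‖g a‖ + ‖g b‖ := dist_le_norm_add_norm _ _
      _ ≤ Real.exp (-M) + Real.exp (-M) := by
          have ha := hbd a; have hb' := hbd b
          rw [hhF] at ha hb'
          gcongr <;> rw [hnorm] <;> exact Real.exp_le_exp.2 (by linarith)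
      _ = 2 * Real.exp (-M) := by ring
  have := hgd.apply_eq_apply_of_bounded hb x y
  have hn : ‖g x‖ = ‖g y‖ := by rw [this]
  rw [hnorm, hnorm] at hn
  have := Real.exp_eq_exp.mp hn
  rw [hhF, hhF]
  linarith
end

section
/- Let P_{c,a}(w) = w^d/d - c·w^{d-1}/(d-1) + a^d with d ≥ 3 and c fixed. Then for |a| sufficiently large, the orbit of the critical point c under P_{c,a} tends to infinity; in particular c is not preperiodic for P_{c,a}. -/
set_option maxHeartbeats 1000000

open Filter

private lemma abs_lower₁ (x y z : ℂ) :
    ‖x‖ - ‖y‖ - ‖z‖ ≤ ‖x - y + z‖ := by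
  have hyz : ‖y - z‖ ≤ ‖y‖ + ‖z‖ :=
    norm_sub_le y z
  have h2 := norm_add_le (x - y + z) (y - z)
  have e : (x - y + z) + (y - z) = x := by ring
  rw [e] at h2
  linarith

private lemma abs_lower₂ (x y z : ℂ) :
    ‖z‖ - ‖x‖ - ‖y‖ ≤ ‖x - y + z‖ := by
  have hyx : ‖y - x‖ ≤ ‖y‖ + ‖x‖ :=
    norm_sub_le y x
  have h2 := norm_add_le (x - y + z) (y - x)
  have e : (x - y + z) + (y - x) = z := by ring
  rw [e] at h2
  linarith

/-- For `P_{c,a}(w) = w^d/d - c·w^{d-1}/(d-1) + a^d` with `d ≥ 3` and `c` fixed, for `|a|`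
sufficiently large the orbit of the critical point `c` tends to infinity; in particular `c`
is not preperiodic. -/
theorem critical_point_escapes (d : ℕ) (hd : 3 ≤ d) (c : ℂ) :
    ∃ A : ℝ, ∀ a : ℂ, A < ‖a‖ →
      ∀ P : ℂ → ℂ, (∀ w, P w = w ^ d / d - c * w ^ (d - 1) / (d - 1) + a ^ d) →
        Tendsto (fun n => ‖P^[n] c‖) atTop atTop ∧
          ¬ ∃ i j : ℕ, i < j ∧ P^[i] c = P^[j] c := by
  set K := ‖c‖ with hK
  have hK0 : 0 ≤ K := norm_nonneg c
  set D : ℝ := (d : ℝ) with hDdef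
  have hD3 : (3:ℝ) ≤ D := by rw [hDdef]; exact_mod_cast hd
  have hDnn : (0:ℝ) ≤ D := by linarith
  set E : ℝ := D - 1 with hEdef
  have hE1 : (1:ℝ) ≤ E := by rw [hEdef]; linarith
  refine ⟨2*K^d + 10*D + 2*D*K + 2, fun a hA P hP => ?_⟩
  set M := ‖a‖ with hM
  have hXnn : (0:ℝ) ≤ K^d := pow_nonneg hK0 d
  have hDK : (0:ℝ) ≤ D*K := mul_nonneg hDnn hK0
  have hM2 : (2:ℝ) ≤ M := by nlinarith
  have hM1 : (1:ℝ) ≤ M := by linarith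
  have hM0 : (0:ℝ) ≤ M := by linarith
  -- the escape radius
  set R : ℝ := 2*D*(M + K + 4) with hRdef
  have hRpos : 0 < R := by nlinarith
  -- key numeric fact: M^d dominates
  have hMd3 : M^3 ≤ M^d := pow_le_pow_right₀ hM1 (by omega)
  have hMdbig : 2*K^d + 2*D*M + 2*D*K + 8*D ≤ M^d := by
    refine le_trans ?_ hMd3
    have hMA : 2*K^d + 10*D + 2*D*K + 2 ≤ M := le_of_lt hA
    nlinarith [mul_le_mul_of_nonneg_left hMA hM0,
      mul_le_mul_of_nonneg_left hM1 hXnn,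
      mul_le_mul_of_nonneg_left hM1 hDK,
      mul_nonneg hDnn (by linarith : (0:ℝ) ≤ M - 1),
      mul_nonneg (mul_nonneg hM0 hM0) (by linarith : (0:ℝ) ≤ M - 1)]
  -- generic abs computations
  have habsad : ‖a ^ d‖ = M ^ d := by rw [norm_pow]
  have habsfrac1 : ∀ w : ℂ, ‖w ^ d / (d:ℂ)‖ = (‖w‖) ^ d / D := by
    intro w; rw [norm_div, norm_pow, Complex.norm_natCast]
  have habsE : ‖(d:ℂ) - 1‖ = E := by
    have h : ((d:ℂ) - 1) = (((d:ℝ) - 1 : ℝ) : ℂ) := by push_cast; ring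
    rw [h, Complex.norm_real, Real.norm_eq_abs, hEdef, hDdef]
    have h0 : (3:ℝ) ≤ (d:ℝ) := by exact_mod_cast hd
    exact abs_of_nonneg (by linarith)
  have habsfrac2 : ∀ w : ℂ, ‖c * w ^ (d-1) / ((d:ℂ) - 1)‖ =
      K * (‖w‖) ^ (d-1) / E := by
    intro w; rw [norm_div, norm_mul, norm_pow, habsE, hK]
  -- base step : R ≤ |P c|
  have hbase : R ≤ ‖P c‖ := by
    rw [hP c]
    have h1 := abs_lower₂ (c ^ d / (d:ℂ)) (c * c ^ (d-1) / ((d:ℂ) - 1)) (a ^ d)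
    rw [habsad, habsfrac1, habsfrac2, ← hK] at h1
    have hKd : K ^ d / D ≤ K ^ d := div_le_self hXnn (by linarith)
    have hKd2 : K * K ^ (d-1) / E ≤ K ^ d := by
      have he : K * K ^ (d-1) = K ^ d := by
        rw [← pow_succ']; congr 1; omega
      rw [he]
      exact div_le_self hXnn hE1
    linarith
  -- escape step : if R ≤ |w| then 2|w| ≤ |P w|
  have hstep : ∀ w : ℂ, R ≤ ‖w‖ → 2 * ‖w‖ ≤ ‖P w‖ := by
    intro w hw
    rw [hP w]
    set t := ‖w‖ with ht
    have ht0 : 0 ≤ t := norm_nonneg w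
    have h1 := abs_lower₁ (w ^ d / (d:ℂ)) (c * w ^ (d-1) / ((d:ℂ) - 1)) (a ^ d)
    rw [habsad, habsfrac1, habsfrac2, ← ht] at h1
    -- facts about t
    have htDM : 2*D*M ≤ t := by nlinarith
    have htDK : 2*D*K ≤ t := by nlinarith
    have htD : 8*D ≤ t := by nlinarith
    have ht1 : 1 ≤ t := by nlinarith
    have htd : t ^ d = t ^ (d-1) * t := by
      rw [← pow_succ]; congr 1; omega
    have htpow0 : 0 ≤ t ^ (d-1) := pow_nonneg ht0 _
    have hDpos : (0:ℝ) < D := by linarith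
    have hfrac2le : K * t ^ (d-1) / E ≤ K * t ^ (d-1) :=
      div_le_self (mul_nonneg hK0 htpow0) hE1
    -- K t^(d-1) ≤ t^d/(2D)
    have key1 : K * t ^ (d-1) ≤ t ^ d / (2*D) := by
      rw [htd, le_div_iff₀ (by linarith : (0:ℝ) < 2*D)]
      nlinarith [mul_le_mul_of_nonneg_left htDK htpow0]
    -- 2t ≤ t^d/(4D)
    have key2 : 2 * t ≤ t ^ d / (4*D) := by
      rw [le_div_iff₀ (by linarith : (0:ℝ) < 4*D)]
      have h1d : 1 ≤ d - 1 := by omega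
      have hpp : t ^ 1 ≤ t ^ (d-1) := pow_le_pow_right₀ ht1 h1d
      rw [pow_one] at hpp
      have h8 : 8 * D ≤ t ^ (d-1) := le_trans htD hpp
      rw [htd]
      nlinarith [mul_le_mul_of_nonneg_right h8 ht0]
    -- M^d ≤ t^d/(4D)
    have key3 : M ^ d ≤ t ^ d / (4*D) := by
      rw [le_div_iff₀ (by linarith : (0:ℝ) < 4*D)]
      have hp1 : (2*D*M) ^ d ≤ t ^ d := pow_le_pow_left₀ (by nlinarith) htDM d
      have h2D : (1:ℝ) ≤ 2*D := by linarith
      have h2d : 2 ≤ d := by omega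
      have hp2 : (2*D)^2 * M ^ d ≤ (2*D*M)^d := by
        have hmp : (2*D*M)^d = (2*D)^d * M^d := mul_pow _ _ d
        rw [hmp]
        exact mul_le_mul_of_nonneg_right (pow_le_pow_right₀ h2D h2d) (pow_nonneg hM0 d)
      have hDD : (0:ℝ) ≤ 4*D*D - 4*D := by nlinarith [mul_le_mul_of_nonneg_left hD3 hDnn]
      linarith [hp1, hp2, mul_nonneg (pow_nonneg hM0 d) hDD]
    have hsplit : t ^ d / (2*D) + t ^ d / (2*D) = t ^ d / D := by
      field_simp
      ring
    have hsplit2 : t ^ d / (4*D) + t ^ d / (4*D) = t ^ d / (2*D) := by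
      field_simp; ring
    linarith
  -- the doubling claim
  have hclaim : ∀ n : ℕ, 2 ^ n * R ≤ ‖P^[n+1] c‖ := by
    intro n
    induction n with
    | zero => simpa using hbase
    | succ n ih =>
      have h2n : (1:ℝ) ≤ 2 ^ n := one_le_pow₀ (by norm_num)
      have hRle : R ≤ ‖P^[n+1] c‖ := le_trans (by nlinarith) ih
      have hs := hstep _ hRle
      rw [Function.iterate_succ_apply']
      calc 2 ^ (n+1) * R = 2 * (2 ^ n * R) := by ring
        _ ≤ 2 * ‖P^[n+1] c‖ := by linarith
        _ ≤ _ := hs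
  -- tendsto
  have htend : Tendsto (fun n => ‖P^[n] c‖) atTop atTop := by
    rw [← tendsto_add_atTop_iff_nat 1]
    apply tendsto_atTop_mono hclaim
    exact Tendsto.atTop_mul_const hRpos (tendsto_pow_atTop_atTop_of_one_lt (by norm_num))
  refine ⟨htend, ?_⟩
  rintro ⟨i, j, hij, hper⟩
  -- periodicity contradicts escape
  have hk : ∀ k : ℕ, P^[i + k * (j - i)] c = P^[i] c := by
    intro k
    induction k with
    | zero => simp
    | succ k ih =>
      have e1 : i + (k+1) * (j - i) = (j - i) + (i + k * (j-i)) := by ring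
      rw [e1, Function.iterate_add_apply, ih, ← Function.iterate_add_apply]
      have e2 : j - i + i = j := by omega
      rw [e2, ← hper]
  obtain ⟨N, hN⟩ := eventually_atTop.mp
    (htend.eventually_ge_atTop (‖P^[i] c‖ + 1))
  have hNle : N ≤ i + N * (j - i) := by
    have h1 : 1 ≤ j - i := by omega
    calc N ≤ N * (j - i) := Nat.le_mul_of_pos_right N (by omega)
      _ ≤ i + N * (j - i) := Nat.le_add_left _ _
  have := hN _ hNle
  rw [hk N] at this
  linarith
end
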